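/- Let a₁, a₂, a₃ ∈ (0,1) and let A₅ = [[0, a₂, 1], [1, 0, 0], [a₁, 1, a₃]]. Then there exists a vector x in the standard simplex of ℝ³ with all three coordinates strictly positive such that A₅x = (c,c,c)ᵀ for some c ∈ ℝ if and only if a₁ + a₃ < 1. -/

import Mathlib

/-- Condition for the existence of a completely mixed strategy (all coordinates strictly
positive, lying in the standard simplex of `ℝ³`) making the row player indifferent
between all three pure strategies. -/
theorem classA5_indifference_iff (a₁ a₂ a₃ : ℝ)
    (h₁ : a₁ ∈ Set.Ioo (0:ℝ) 1) (h₂ : a₂ ∈ Set.Ioo (0:ℝ) 1) (h₃ : a₃ ∈ Set.Ioo (0:ℝ) 1) :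
    (∃ x : Fin 3 → ℝ, (∀ j, 0 < x j) ∧ (∑ j, x j = 1) ∧
        ∃ c : ℝ, ∀ j, (!![0, a₂, 1; 1, 0, 0; a₁, 1, a₃]).mulVec x j = c) ↔
      a₁ + a₃ < 1 := by
  obtain ⟨ha1, ha1'⟩ := h₁
  obtain ⟨ha2, ha2'⟩ := h₂
  obtain ⟨ha3, ha3'⟩ := h₃
  constructor
  · rintro ⟨x, hpos, hsum, c, hc⟩
    have e0 := hc 0
    have e1 := hc 1
    have e2 := hc 2
    simp [Matrix.mulVec, dotProduct, Fin.sum_univ_three] at e0 e1 e2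
    have hx0 := hpos 0
    have hx1 := hpos 1
    have ht : (0:ℝ) < 1 - a₂ * a₃ := by nlinarith
    have key : (1 - a₂ * a₃) * x 1 = (1 - a₁ - a₃) * x 0 := by
      linear_combination e2 - a₃ * e0 + (a₃ - 1) * e1
    nlinarith [mul_pos hx1 ht, key]
  · intro h
    have ht : (0:ℝ) < 1 - a₂ * a₃ := by nlinarith
    have hu2 : (0:ℝ) < 1 - a₁ - a₃ := by linarith
    have hu3 : (0:ℝ) < 1 - a₂ * (1 - a₁) := by nlinarith
    set S : ℝ := (1 - a₂ * a₃) + (1 - a₁ - a₃) + (1 - a₂ * (1 - a₁)) with hS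
    have hSpos : 0 < S := by positivity
    refine ⟨fun j => ![(1 - a₂ * a₃)/S, (1 - a₁ - a₃)/S, (1 - a₂ * (1 - a₁))/S] j, ?_, ?_, ?_⟩
    · intro j
      fin_cases j <;> simp <;> positivity
    · simp [Fin.sum_univ_three]
      field_simp
      linarith [hS]
    · refine ⟨(1 - a₂ * a₃)/S, fun j => ?_⟩
      fin_cases j <;>
        simp [Matrix.mulVec, dotProduct, Fin.sum_univ_three] <;>
        field_simp <;> ring
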